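/- Let $y_1,y_2,y_3$ be vectors in Minkowski space $\mathbb{R}^{1,3}$ with $\det_{y_1,y_2}\neq 0$. Then $\det_{y_1,y_2,y_3}=0$ if and only if there exist real numbers $\alpha,\beta$ and a lightlike vector $\ell$ ($\ell^2=0$) with $(\ell y_1)=(\ell y_2)=0$ such that $y_3=\alpha y_1+\beta y_2+\ell$. -/

import Mathlib

/-- Minkowski inner product on `ℝ^{1,3}` with signature `(+,-,-,-)`. -/
noncomputable def mink (x y : Fin 4 → ℝ) : ℝ :=
  x 0 * y 0 - x 1 * y 1 - x 2 * y 2 - x 3 * y 3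

/-- `2×2` Gram determinant `det_{a,b} = a²b² − (ab)²`. -/
noncomputable def gram2 (a b : Fin 4 → ℝ) : ℝ := mink a a * mink b b - (mink a b) ^ 2

/-- `3×3` Gram determinant of the Minkowski inner products. -/
noncomputable def gram3 (y1 y2 y3 : Fin 4 → ℝ) : ℝ :=
  mink y1 y1 * mink y2 y2 * mink y3 y3
    - mink y1 y1 * (mink y2 y3) ^ 2 - mink y2 y2 * (mink y1 y3) ^ 2
    - mink y3 y3 * (mink y1 y2) ^ 2
    + 2 * mink y1 y2 * mink y1 y3 * mink y2 y3

/-- Cofactor `Λ_k` of `(y_i y_j)`: `Λ_k = (y_i y_k)(y_j y_k) − y_k²(y_i y_j)`. -/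
noncomputable def Lam (yi yj yk : Fin 4 → ℝ) : ℝ :=
  mink yi yk * mink yj yk - mink yk yk * mink yi yj

lemma mink_symm (x y : Fin 4 → ℝ) : mink x y = mink y x := by unfold mink; ring

/-- If `det_{y1,y2} ≠ 0`, then `det_{y1,y2,y3} = 0` iff
`y3 = α y1 + β y2 + ℓ` for some reals `α, β` and a lightlike `ℓ` orthogonal to `y1, y2`. -/
theorem gram3_eq_zero_iff (y1 y2 y3 : Fin 4 → ℝ) (h : gram2 y1 y2 ≠ 0) :
    gram3 y1 y2 y3 = 0 ↔
      ∃ (α β : ℝ) (ℓ : Fin 4 → ℝ), mink ℓ ℓ = 0 ∧ mink ℓ y1 = 0 ∧ mink ℓ y2 = 0 ∧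
        y3 = α • y1 + β • y2 + ℓ := by
  unfold gram2 at h
  have h' : mink y2 y2 * mink y1 y1 - mink y1 y2 ^ 2 ≠ 0 := by rwa [mul_comm]
  constructor
  · intro hg
    set p := mink y1 y1 with hp
    set q := mink y1 y2 with hq
    set r := mink y2 y2 with hr
    set s := mink y1 y3 with hs
    set t := mink y2 y3 with ht
    set a : ℝ := (s * r - t * q) / (p * r - q ^ 2) with ha
    set b : ℝ := (t * p - s * q) / (p * r - q ^ 2) with hb
    refine ⟨a, b, fun i => y3 i - a * y1 i - b * y2 i, ?_, ?_, ?_, ?_⟩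
    · have ll : mink (fun i => y3 i - a * y1 i - b * y2 i)
          (fun i => y3 i - a * y1 i - b * y2 i)
          = mink y3 y3 - 2*a*s - 2*b*t + a^2*p + 2*a*b*q + b^2*r := by
        rw [hp, hq, hs, ht, hr]; unfold mink; ring
      have key : mink (fun i => y3 i - a * y1 i - b * y2 i)
          (fun i => y3 i - a * y1 i - b * y2 i) * (p * r - q ^ 2)
          = gram3 y1 y2 y3 := by
        rw [ll]; unfold gram3
        rw [← hp, ← hq, ← hr, ← hs, ← ht, ha, hb]
        field_simp
        ring
      have := key.trans hg
      exact (mul_eq_zero.mp this).resolve_right h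
    · have l1 : mink (fun i => y3 i - a * y1 i - b * y2 i) y1
          = s - a * p - b * q := by
        rw [hp, hq, hs]; unfold mink; ring
      rw [l1, ha, hb]; field_simp; ring
    · have l2 : mink (fun i => y3 i - a * y1 i - b * y2 i) y2
          = t - a * q - b * r := by
        rw [hq, hr, ht]; unfold mink; ring
      rw [l2, ha, hb]; field_simp; ring
    · funext i
      simp only [Pi.add_apply, Pi.smul_apply, smul_eq_mul]
      ring
  · rintro ⟨a, b, l, hl, h1, h2, rfl⟩
    have e1 : mink y1 (a • y1 + b • y2 + l)
        = a * mink y1 y1 + b * mink y1 y2 + mink l y1 := by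
      unfold mink; simp only [Pi.add_apply, Pi.smul_apply, smul_eq_mul]; ring
    have e2 : mink y2 (a • y1 + b • y2 + l)
        = a * mink y1 y2 + b * mink y2 y2 + mink l y2 := by
      unfold mink; simp only [Pi.add_apply, Pi.smul_apply, smul_eq_mul]; ring
    have e3 : mink (a • y1 + b • y2 + l) (a • y1 + b • y2 + l)
        = a^2 * mink y1 y1 + 2*a*b*mink y1 y2 + b^2*mink y2 y2
          + 2*a*mink l y1 + 2*b*mink l y2 + mink l l := by
      unfold mink; simp only [Pi.add_apply, Pi.smul_apply, smul_eq_mul]; ring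
    unfold gram3
    rw [e1, e2, e3, h1, h2, hl]
    ring
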